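/- Let n and r be positive integers and let Θ be a Hermitian positive definite matrix on ℂⁿ⊗ℂʳ, with partial trace ω over the second factor. Then det Θ and det ω are positive real numbers and det Θ ≤ r^{-nr}·(det ω)^r. -/

import Mathlib

open Matrix ComplexOrder Kronecker

lemma my_trace_eq {N : Type*} [Fintype N] [DecidableEq N] {A : Matrix N N ℂ}
    (hA : A.IsHermitian) : A.trace = ((∑ i, hA.eigenvalues i : ℝ) : ℂ) := by
  rw [hA.trace_eq_sum_eigenvalues]
  push_cast
  rfl

lemma my_det_eq {N : Type*} [Fintype N] [DecidableEq N] {A : Matrix N N ℂ}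
    (hA : A.IsHermitian) : A.det = ((∏ i, hA.eigenvalues i : ℝ) : ℂ) := by
  rw [hA.det_eq_prod_eigenvalues]; push_cast; rfl

lemma my_amgm {ι : Type*} [Fintype ι] [Nonempty ι] (μ : ι → ℝ) (hμ : ∀ i, 0 ≤ μ i) :
    ∏ i, μ i ≤ ((∑ i, μ i) / Fintype.card ι) ^ Fintype.card ι := by
  set c := Fintype.card ι with hc
  have hc0 : 0 < c := Fintype.card_pos
  have h := Real.geom_mean_le_arith_mean_weighted Finset.univ (fun _ => (c : ℝ)⁻¹) μ
    (fun i _ => by positivity) (by simp only [Finset.sum_const, Finset.card_univ, ← hc, nsmul_eq_mul]; field_simp) (fun i _ => hμ i)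
  have hprod : (∏ i, μ i ^ ((c : ℝ)⁻¹)) = (∏ i, μ i) ^ ((c : ℝ)⁻¹) :=
    Real.finset_prod_rpow _ _ (fun i _ => hμ i) _
  rw [hprod] at h
  have hP : (0 : ℝ) ≤ ∏ i, μ i := Finset.prod_nonneg fun i _ => hμ i
  calc ∏ i, μ i = ((∏ i, μ i) ^ ((c : ℝ)⁻¹)) ^ c := by
        rw [← Real.rpow_natCast (_ ^ _) c, ← Real.rpow_mul hP,
          inv_mul_cancel₀ (by positivity), Real.rpow_one]
    _ ≤ ((∑ i, μ i) / c) ^ c := by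
        apply pow_le_pow_left₀ (Real.rpow_nonneg hP _)
        calc (∏ i, μ i) ^ ((c:ℝ)⁻¹) ≤ ∑ i, (c:ℝ)⁻¹ * μ i := h
          _ = (∑ i, μ i) / c := by rw [← Finset.mul_sum]; ring

/-- **Pointwise content of Proposition 3.2**: if `Θ` is a Hermitian positive definite
matrix on `ℂⁿ ⊗ ℂʳ` and `ω` is its partial trace over the second factor, then
`det Θ` and `det ω` are positive reals and `det Θ ≤ r^{-nr} (det ω)^r`. -/
theorem stmt_0 (n r : ℕ) (hn : 0 < n) (hr : 0 < r)
    (Θ : Matrix (Fin n × Fin r) (Fin n × Fin r) ℂ) (hΘ : Θ.PosDef)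
    (ω : Matrix (Fin n) (Fin n) ℂ)
    (hω : ω = Matrix.of fun j k : Fin n => ∑ l : Fin r, Θ (j, l) (k, l)) :
    (0 < Θ.det.re ∧ Θ.det.im = 0) ∧ (0 < ω.det.re ∧ ω.det.im = 0) ∧
      Θ.det.re ≤ ((r : ℝ) ^ (n * r))⁻¹ * ω.det.re ^ r := by
  haveI : Nonempty (Fin n) := Fin.pos_iff_nonempty.mp hn
  haveI : Nonempty (Fin r) := Fin.pos_iff_nonempty.mp hr
  -- ω is positive definite
  have hωpd : ω.PosDef := by
    refine posDef_iff_dotProduct_mulVec.mpr ⟨?_, ?_⟩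
    · ext i j
      simp only [conjTranspose_apply, hω, of_apply, star_sum]
      exact Finset.sum_congr rfl fun l _ => hΘ.1.apply (i, l) (j, l)
    · intro x hx
      set v : Fin r → (Fin n × Fin r → ℂ) := fun l p => if p.2 = l then x p.1 else 0 with hv
      have hsum : dotProduct (star x) (ω *ᵥ x)
          = ∑ l : Fin r, dotProduct (star (v l)) (Θ *ᵥ (v l)) := by
        simp only [dotProduct, mulVec, hω, of_apply, hv, Pi.star_apply,
          apply_ite (star : ℂ → ℂ), star_zero,
          Fintype.sum_prod_type, mul_ite, mul_zero, ite_mul, zero_mul,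
          Finset.sum_ite_eq', Finset.sum_ite_eq, Finset.mem_univ, if_true, Finset.mul_sum,
          Finset.sum_mul]
        have key : ∀ (l : Fin r) (j : Fin n), (∑ m : Fin r, ∑ k : Fin n,
            if m = l then star (x j) * (Θ (j, m) (k, l) * x k) else 0)
            = ∑ k, star (x j) * (Θ (j, l) (k, l) * x k) := by
          intro l j; rw [Finset.sum_comm]; simp
        simp only [key]
        conv_rhs => rw [Finset.sum_comm]
        refine Finset.sum_congr rfl fun j _ => ?_
        rw [Finset.sum_comm]
      have hvne : ∀ l, v l ≠ 0 := by
        intro l h0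
        obtain ⟨j, hj⟩ := Function.ne_iff.mp hx
        apply hj
        have := congrFun h0 (j, l)
        simpa [hv] using this
      rw [hsum]
      exact Finset.sum_pos (fun l _ => hΘ.dotProduct_mulVec_pos (hvne l)) Finset.univ_nonempty
  have hωdet := hωpd.det_pos
  obtain ⟨hωre, hωim⟩ := Complex.lt_def.mp hωdet
  simp only [Complex.zero_re, Complex.zero_im] at hωre hωim
  have hΘdet := hΘ.det_pos
  obtain ⟨hΘre, hΘim⟩ := Complex.lt_def.mp hΘdet
  simp only [Complex.zero_re, Complex.zero_im] at hΘre hΘim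
  refine ⟨⟨hΘre, hΘim.symm⟩, ⟨hωre, hωim.symm⟩, ?_⟩
  -- setup
  have hB : (ω⁻¹).PosDef := hωpd.inv
  have hBs : (ω⁻¹).PosSemidef := hB.posSemidef
  open scoped MatrixOrder in
  set S : Matrix (Fin n) (Fin n) ℂ := CFC.sqrt (ω⁻¹) with hSdef
  open scoped MatrixOrder in
  have hS : S.PosSemidef := (CFC.sqrt_nonneg _).posSemidef
  open scoped MatrixOrder in
  have hSS : S * S = ω⁻¹ := CFC.sqrt_mul_sqrt_self _ hBs.nonneg
  set Q : Matrix (Fin n × Fin r) (Fin n × Fin r) ℂ := S ⊗ₖ (1 : Matrix (Fin r) (Fin r) ℂ)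
    with hQdef
  have hQH : Qᴴ = Q := by
    ext ⟨j, l⟩ ⟨k, m⟩
    simp only [hQdef, conjTranspose_apply, kroneckerMap_apply, one_apply, star_mul',
      apply_ite (star : ℂ → ℂ), star_one, star_zero, hS.1.apply]
    by_cases h : m = l
    · subst h; simp [mul_comm]
    · simp [h, Ne.symm h]
  set M : Matrix (Fin n × Fin r) (Fin n × Fin r) ℂ := Qᴴ * Θ * Q with hMdef
  have hM : M.PosSemidef := hΘ.posSemidef.conjTranspose_mul_mul_same Q
  have hQQ : Q * Q = (ω⁻¹) ⊗ₖ (1 : Matrix (Fin r) (Fin r) ℂ) := by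
    rw [hQdef, ← mul_kronecker_mul, hSS, one_mul]
  have hωu : IsUnit ω.det := isUnit_iff_ne_zero.mpr hωdet.ne'
  -- trace of M is n
  have htr : M.trace = (n : ℂ) := by
    rw [hMdef, trace_mul_cycle, hQH, hQQ]
    have h1 : ((ω⁻¹ ⊗ₖ (1 : Matrix (Fin r) (Fin r) ℂ)) * Θ).trace = (ω⁻¹ * ω).trace := by
      simp only [Matrix.trace, Matrix.diag_apply, Matrix.mul_apply, Fintype.sum_prod_type,
        kroneckerMap_apply, one_apply, mul_ite, mul_one, mul_zero, ite_mul, zero_mul,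
        Finset.sum_ite_eq', Finset.sum_ite_eq, Finset.mem_univ, if_true, hω, of_apply,
        Finset.mul_sum]
      exact Finset.sum_congr rfl fun j _ => Finset.sum_comm
    rw [h1, Matrix.nonsing_inv_mul ω hωu, Matrix.trace_one]
    simp
  -- determinant of M
  have hdetM : M.det = Θ.det * (ω.det)⁻¹ ^ r := by
    rw [hMdef, Matrix.det_mul, Matrix.det_mul, hQH]
    have : Q.det * Q.det = (ω.det)⁻¹ ^ r := by
      rw [← Matrix.det_mul, hQQ, det_kronecker, Matrix.det_one, Matrix.det_nonsing_inv]
      simp [Ring.inverse_eq_inv']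
    rw [mul_comm Q.det Θ.det, mul_assoc, this]
  -- eigenvalue bound
  set μ : Fin n × Fin r → ℝ := hM.1.eigenvalues with hμdef
  have hμ0 : ∀ i, 0 ≤ μ i := hM.eigenvalues_nonneg
  have hcard : Fintype.card (Fin n × Fin r) = n * r := by simp
  have hsumμ : ∑ i, μ i = n := by
    have := my_trace_eq hM.1
    rw [htr] at this
    exact_mod_cast this.symm
  have hgm : ∏ i, μ i ≤ ((r : ℝ) ^ (n * r))⁻¹ := by
    have h := my_amgm μ hμ0
    rw [hcard, hsumμ] at h
    refine h.trans_eq ?_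
    rw [← inv_pow]
    congr 1
    field_simp
    norm_cast
  -- put it together
  have hne : ω.det ≠ 0 := hωdet.ne'
  set D : ℝ := ω.det.re with hDdef
  have hωdetC : ω.det = (D : ℂ) := Complex.ext rfl (by simpa using hωim.symm)
  have h3 : Θ.det = M.det * ω.det ^ r := by
    rw [hdetM, inv_pow, mul_assoc, inv_mul_cancel₀ (pow_ne_zero _ hne), mul_one]
  have hΘdetC : Θ.det = (((∏ i, μ i) * D ^ r : ℝ) : ℂ) := by
    rw [h3, my_det_eq hM.1, hωdetC]
    push_cast
    ring
  rw [hΘdetC, Complex.ofReal_re]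
  exact mul_le_mul_of_nonneg_right hgm (pow_nonneg hωre.le r)
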